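/- If d is odd, then for all natural numbers a, b, the d-th power of the Weyl operator is the identity: (X^a * Z^b)^d = 1. -/

import Mathlib

open Matrix Complex

/-- The primitive `d`-th root of unity `ω = exp(2πi/d)`. -/
noncomputable def omega (d : ℕ) : ℂ := Complex.exp (2 * Real.pi * Complex.I / d)

/-- The generalized Pauli shift matrix `X` on a `d`-dimensional qudit:
`X i j = 1` iff `i = j + 1 (mod d)`. -/
def PauliX (d : ℕ) [NeZero d] : Matrix (Fin d) (Fin d) ℂ :=
  Matrix.of fun i j => if i = j + 1 then 1 else 0

/-- The generalized Pauli phase matrix `Z = diag(1, ω, ω², …)`. -/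
noncomputable def PauliZ (d : ℕ) [NeZero d] : Matrix (Fin d) (Fin d) ℂ :=
  Matrix.diagonal fun j => omega d ^ (j : ℕ)

lemma omega_pow_d (d : ℕ) [NeZero d] : omega d ^ d = 1 := by
  rw [omega, ← Complex.exp_nat_mul]
  have hd : (d:ℂ) ≠ 0 := Nat.cast_ne_zero.mpr (NeZero.ne d)
  have : (d:ℂ) * (2 * Real.pi * Complex.I / d) = 2 * Real.pi * Complex.I := by
    field_simp
  rw [this, Complex.exp_two_pi_mul_I]

lemma omega_mod (d : ℕ) [NeZero d] (n : ℕ) : omega d ^ (n % d) = omega d ^ n := by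
  conv_rhs => rw [← Nat.mod_add_div n d]
  rw [pow_add, pow_mul, omega_pow_d, one_pow, mul_one]

open Fin.NatCast in
lemma omega_val_succ (d : ℕ) [NeZero d] (i : Fin d) :
    omega d ^ ((i + 1 : Fin d) : ℕ) = omega d * omega d ^ (i : ℕ) := by
  have h1 : ((1 : Fin d) : ℕ) = 1 % d := by
    rw [← Nat.cast_one, Fin.val_natCast]
  rw [Fin.val_add, omega_mod, pow_add, h1, omega_mod, pow_one, mul_comm]

open Fin.NatCast Fin.CommRing in
lemma PauliX_pow (d : ℕ) [NeZero d] (n : ℕ) :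
    PauliX d ^ n = Matrix.of fun i j => if i = j + (n : Fin d) then 1 else 0 := by
  induction n with
  | zero =>
    ext i j
    simp [Matrix.one_apply, eq_comm]
  | succ n ih =>
    ext i j
    rw [pow_succ, ih]
    simp only [Matrix.mul_apply, Matrix.of_apply, PauliX, ite_mul, one_mul, zero_mul,
      mul_ite, mul_one, mul_zero]
    rw [Finset.sum_eq_single (j + 1)]
    · simp only [if_pos rfl]
      have : (j + 1) + (n : Fin d) = j + ((n : ℕ) + 1 : ℕ) := by
        push_cast
        ring
      rw [this]
      simp
    · intro k _ hk
      simp [hk]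
    · simp

open Fin.NatCast in
lemma PauliX_pow_d (d : ℕ) [NeZero d] : PauliX d ^ d = 1 := by
  rw [PauliX_pow]
  ext i j
  simp [Matrix.one_apply, Fin.natCast_self, eq_comm]

lemma PauliZ_pow (d : ℕ) [NeZero d] (b : ℕ) :
    PauliZ d ^ b = Matrix.diagonal fun j : Fin d => omega d ^ (b * (j : ℕ)) := by
  rw [PauliZ, Matrix.diagonal_pow]
  ext i j
  by_cases h : i = j
  · subst h
    simp [Matrix.diagonal_apply_eq, ← pow_mul, mul_comm]
  · simp [Matrix.diagonal_apply_ne _ h]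

lemma PauliZ_pow_d (d : ℕ) [NeZero d] : PauliZ d ^ d = 1 := by
  rw [PauliZ_pow]
  have : (fun j : Fin d => omega d ^ (d * (j : ℕ))) = fun _ => 1 := by
    funext j
    rw [pow_mul, omega_pow_d, one_pow]
  rw [this, Matrix.diagonal_one]

lemma comm_ZX (d : ℕ) [NeZero d] :
    PauliZ d * PauliX d = omega d • (PauliX d * PauliZ d) := by
  ext i j
  simp only [PauliZ, PauliX, Matrix.diagonal_mul, Matrix.mul_diagonal, Matrix.smul_apply,
    Matrix.of_apply, smul_eq_mul]
  by_cases h : i = j + 1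
  · subst h
    simp [omega_val_succ, mul_comm, mul_assoc]
  · simp [h]

lemma comm_Z_Xpow (d : ℕ) [NeZero d] (a : ℕ) :
    PauliZ d * PauliX d ^ a = omega d ^ a • (PauliX d ^ a * PauliZ d) := by
  induction a with
  | zero => simp
  | succ a ih =>
    rw [pow_succ, ← mul_assoc, ih, smul_mul_assoc, mul_assoc, comm_ZX, mul_smul_comm,
      smul_smul, ← pow_succ, ← mul_assoc, pow_succ]

lemma comm_Zpow_Xpow (d : ℕ) [NeZero d] (a b : ℕ) :
    PauliZ d ^ b * PauliX d ^ a = omega d ^ (a * b) • (PauliX d ^ a * PauliZ d ^ b) := by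
  induction b with
  | zero => simp
  | succ b ih =>
    rw [pow_succ, mul_assoc, comm_Z_Xpow, mul_smul_comm, ← mul_assoc, ih, smul_mul_assoc,
      smul_smul, ← pow_add, mul_assoc, ← pow_succ]
    congr 2
    ring

lemma weyl_pow (d : ℕ) [NeZero d] (a b n : ℕ) :
    (PauliX d ^ a * PauliZ d ^ b) ^ n =
      omega d ^ (a * b * n.choose 2) • (PauliX d ^ (a * n) * PauliZ d ^ (b * n)) := by
  induction n with
  | zero => simp
  | succ n ih =>
    have h3 : (n + 1).choose 2 = n.choose 2 + n := by
      rw [Nat.choose_succ_succ, Nat.choose_one_right, Nat.add_comm]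
    rw [pow_succ, ih, smul_mul_assoc,
      show a * (n + 1) = a * n + a by ring, show b * (n + 1) = b * n + b by ring, h3,
      show a * b * (n.choose 2 + n) = a * b * n.choose 2 + a * (b * n) by ring,
      pow_add (PauliX d), pow_add (PauliZ d), pow_add (omega d),
      mul_assoc (PauliX d ^ (a * n)), ← mul_assoc (PauliZ d ^ (b * n)),
      comm_Zpow_Xpow d a (b * n), smul_mul_assoc, mul_smul_comm, smul_smul,
      mul_assoc (PauliX d ^ a), ← mul_assoc (PauliX d ^ (a * n))]

theorem weyl_pow_dim_eq_one_of_odd (d : ℕ) [NeZero d] (hd : Odd d) (a b : ℕ) :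
    (PauliX d ^ a * PauliZ d ^ b) ^ d = 1 := by
  rw [weyl_pow]
  have hX : PauliX d ^ (a * d) = 1 := by rw [mul_comm, pow_mul, PauliX_pow_d, one_pow]
  have hZ : PauliZ d ^ (b * d) = 1 := by rw [mul_comm, pow_mul, PauliZ_pow_d, one_pow]
  have hdvd : d ∣ d.choose 2 := by
    obtain ⟨m, hm⟩ := hd
    subst hm
    rw [Nat.choose_two_right]
    have h1 : (2 * m + 1) - 1 = 2 * m := by omega
    rw [h1, show (2 * m + 1) * (2 * m) = (2 * m + 1) * m * 2 by ring,
      Nat.mul_div_cancel _ (by norm_num)]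
    exact Dvd.intro m rfl
  obtain ⟨k, hk⟩ := hdvd
  rw [hX, hZ, mul_one, hk, show a * b * (d * k) = d * (a * b * k) by ring,
    pow_mul, omega_pow_d, one_pow, one_smul]
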